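/- Let d ≥ 3 be an integer and let H be a (d+1)-uniform hypergraph on a finite vertex set V with |V| = n ≥ 1 such that for every subset S ⊆ V, the number of hyperedges of H contained in S is at most (d+1)·|S|^{⌈d/2⌉}. Then the chromatic number of H satisfies χ(H) ≤ ((d+1)^{(d+2)/d} / (⌈d/2⌉ − 1)) · n^{(⌈d/2⌉−1)/d} + 1. -/

import Mathlib

open Real Finset

section DeyPachHelpers

variable {α : Type*} [DecidableEq α]


lemma sum_pow_powerset (S : Finset α) (p q : ℝ) :
    ∑ A ∈ S.powerset, p ^ A.card * q ^ (S.card - A.card) = (p + q) ^ S.card := by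
  have h := Finset.prod_add (fun _ : α => p) (fun _ : α => q) S
  simp only [Finset.prod_const] at h
  rw [h]
  exact Finset.sum_congr rfl fun A hA => by
    rw [Finset.card_sdiff_of_subset (Finset.mem_powerset.1 hA)]

lemma sum_pow_powerset_subset (S e : Finset α) (he : e ⊆ S) (p q : ℝ) :
    ∑ A ∈ S.powerset, (if e ⊆ A then p ^ A.card * q ^ (S.card - A.card) else 0)
      = p ^ e.card * (p + q) ^ (S.card - e.card) := by
  rw [← Finset.sum_filter]
  have key : ∑ A ∈ S.powerset.filter (fun A => e ⊆ A), p ^ A.card * q ^ (S.card - A.card)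
      = ∑ B ∈ (S \ e).powerset, p ^ (e.card + B.card) * q ^ (S.card - e.card - B.card) := by
    apply Finset.sum_nbij' (i := fun A => A \ e) (j := fun B => B ∪ e)
    · intro A hA
      simp only [Finset.mem_filter, Finset.mem_powerset] at hA
      exact Finset.mem_powerset.2 (Finset.sdiff_subset_sdiff hA.1 le_rfl)
    · intro B hB
      simp only [Finset.mem_powerset] at hB
      refine Finset.mem_filter.2 ⟨Finset.mem_powerset.2 ?_, Finset.subset_union_right⟩
      exact Finset.union_subset (hB.trans Finset.sdiff_subset) he
    · intro A hA
      simp only [Finset.mem_filter, Finset.mem_powerset] at hA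
      exact Finset.sdiff_union_of_subset hA.2
    · intro B hB
      simp only [Finset.mem_powerset] at hB
      have : Disjoint B e := Finset.disjoint_of_subset_left hB sdiff_disjoint
      rw [Finset.union_sdiff_right, Finset.sdiff_eq_self_of_disjoint this]
    · intro A hA
      simp only [Finset.mem_filter, Finset.mem_powerset] at hA
      have h1 : e.card + (A \ e).card = A.card := by
        rw [Finset.card_sdiff_of_subset hA.2]
        have := Finset.card_le_card hA.2
        omega
      have h2 : S.card - e.card - (A \ e).card = S.card - A.card := by
        rw [Finset.card_sdiff_of_subset hA.2]
        have h3 := Finset.card_le_card hA.2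
        have h4 := Finset.card_le_card hA.1
        omega
      rw [h1, h2]
  rw [key]
  have : ∀ B ∈ (S \ e).powerset, p ^ (e.card + B.card) * q ^ (S.card - e.card - B.card)
      = p ^ e.card * (p ^ B.card * q ^ ((S \ e).card - B.card)) := by
    intro B hB
    rw [pow_add, Finset.card_sdiff_of_subset he, mul_assoc]
  rw [Finset.sum_congr rfl this, ← Finset.mul_sum, sum_pow_powerset, Finset.card_sdiff_of_subset he]

lemma exp_card (S : Finset α) (p : ℝ) (hS : S.Nonempty) :
    ∑ A ∈ S.powerset, (p ^ A.card * (1-p) ^ (S.card - A.card)) * (A.card : ℝ)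
      = p * S.card := by
  have hcard : ∀ A ∈ S.powerset, (p ^ A.card * (1-p) ^ (S.card - A.card)) * (A.card : ℝ)
      = ∑ v ∈ S, (if ({v} : Finset α) ⊆ A then p ^ A.card * (1-p) ^ (S.card - A.card) else 0) := by
    intro A hA
    rw [← Finset.sum_filter, Finset.sum_const]
    simp only [Finset.singleton_subset_iff, Finset.filter_mem_eq_inter,
      Finset.inter_eq_right.2 (Finset.mem_powerset.1 hA)]
    rw [nsmul_eq_mul, mul_comm]
  rw [Finset.sum_congr rfl hcard, Finset.sum_comm]
  have hv : ∀ v ∈ S, ∑ A ∈ S.powerset,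
      (if ({v} : Finset α) ⊆ A then p ^ A.card * (1-p) ^ (S.card - A.card) else 0) = p := by
    intro v hv
    rw [sum_pow_powerset_subset S {v} (Finset.singleton_subset_iff.2 hv)]
    have h1 : S.card - ({v} : Finset α).card = S.card - 1 := by simp
    simp only [Finset.card_singleton, pow_one, add_sub_cancel, one_pow, mul_one, h1]
  rw [Finset.sum_congr rfl hv, Finset.sum_const, nsmul_eq_mul, mul_comm]

lemma exp_edges (S : Finset α) (F : Finset (Finset α)) (hFS : ∀ e ∈ F, e ⊆ S) (p : ℝ) :
    ∑ A ∈ S.powerset, (p ^ A.card * (1-p) ^ (S.card - A.card))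
        * ((F.filter (fun e => e ⊆ A)).card : ℝ)
      = ∑ e ∈ F, p ^ e.card := by
  have hcard : ∀ A ∈ S.powerset, (p ^ A.card * (1-p) ^ (S.card - A.card))
        * ((F.filter (fun e => e ⊆ A)).card : ℝ)
      = ∑ e ∈ F, (if e ⊆ A then p ^ A.card * (1-p) ^ (S.card - A.card) else 0) := by
    intro A hA
    rw [← Finset.sum_filter, Finset.sum_const, nsmul_eq_mul, mul_comm]
  rw [Finset.sum_congr rfl hcard, Finset.sum_comm]
  refine Finset.sum_congr rfl fun e he => ?_
  rw [sum_pow_powerset_subset S e (hFS e he)]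
  simp

/-- There is an independent set of size at least `p|S| - ∑_e p^{|e|}`. -/
lemma exists_indep (S : Finset α) (hS : S.Nonempty) (F : Finset (Finset α))
    (hFS : ∀ e ∈ F, e ⊆ S) (hne : ∀ e ∈ F, e.Nonempty)
    (p : ℝ) (hp0 : 0 < p) (hp1 : p < 1) :
    ∃ B ⊆ S, (∀ e ∈ F, ¬ e ⊆ B) ∧
      p * S.card - (∑ e ∈ F, p ^ e.card) ≤ (B.card : ℝ) := by
  set w : Finset α → ℝ := fun A => p ^ A.card * (1-p) ^ (S.card - A.card) with hw
  set θ : ℝ := p * S.card - ∑ e ∈ F, p ^ e.card with hθ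
  -- first find A with card - edgecount ≥ θ
  have hwpos : ∀ A, 0 < w A := fun A =>
    mul_pos (pow_pos hp0 _) (pow_pos (by linarith) _)
  have hsum1 : ∑ A ∈ S.powerset, w A = 1 := by
    rw [hw, sum_pow_powerset]; simp
  have hexp : ∑ A ∈ S.powerset,
      w A * ((A.card : ℝ) - ((F.filter (fun e => e ⊆ A)).card : ℝ)) = θ := by
    simp only [mul_sub]
    rw [Finset.sum_sub_distrib, exp_card S p hS, exp_edges S F hFS p]
  have hA : ∃ A ∈ S.powerset,
      θ ≤ (A.card : ℝ) - ((F.filter (fun e => e ⊆ A)).card : ℝ) := by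
    by_contra hcon
    push_neg at hcon
    have hlt : ∑ A ∈ S.powerset,
        w A * ((A.card : ℝ) - ((F.filter (fun e => e ⊆ A)).card : ℝ))
        < ∑ A ∈ S.powerset, w A * θ := by
      apply Finset.sum_lt_sum_of_nonempty (Finset.powerset_nonempty S)
      intro A hAmem
      exact mul_lt_mul_of_pos_left (hcon A hAmem) (hwpos A)
    rw [hexp, ← Finset.sum_mul, hsum1, one_mul] at hlt
    exact lt_irrefl θ hlt
  obtain ⟨A, hAS, hAval⟩ := hA
  rw [Finset.mem_powerset] at hAS
  -- delete one vertex from each edge inside A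
  set F' : Finset (Finset α) := F.filter (fun e => e ⊆ A) with hF'
  set Del : Finset α := F'.biUnion
    (fun e => if h : e.Nonempty then {h.choose} else ∅) with hDel
  have hDelcard : Del.card ≤ F'.card := by
    apply le_trans (Finset.card_biUnion_le)
    apply le_trans (Finset.sum_le_card_nsmul _ _ 1 ?_)
    · simp
    · intro e he
      split
      · simp
      · simp
  refine ⟨A \ Del, (Finset.sdiff_subset).trans hAS, ?_, ?_⟩
  · intro e heF hsub
    have heA : e ⊆ A := hsub.trans Finset.sdiff_subset
    have heF' : e ∈ F' := Finset.mem_filter.2 ⟨heF, heA⟩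
    have hene : e.Nonempty := hne e heF
    have hchoose : hene.choose ∈ Del := by
      rw [hDel]
      apply Finset.mem_biUnion.2 ⟨e, heF', ?_⟩
      rw [dif_pos hene]
      simp
    have : hene.choose ∈ A \ Del := hsub hene.choose_spec
    exact (Finset.mem_sdiff.1 this).2 hchoose
  · have h1 : A.card ≤ (A \ Del).card + Del.card := by
      have := Finset.card_le_card_sdiff_add_card (s := A) (t := Del)
      exact this
    have h2 : ((A \ Del).card : ℝ) ≥ (A.card : ℝ) - (F'.card : ℝ) := by
      have := hDelcard
      push_cast
      have h1' : (A.card : ℝ) ≤ ((A \ Del).card : ℝ) + (Del.card : ℝ) := by exact_mod_cast h1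
      have h3' : (Del.card : ℝ) ≤ (F'.card : ℝ) := by exact_mod_cast hDelcard
      linarith
    calc θ ≤ (A.card : ℝ) - (F'.card : ℝ) := hAval
    _ ≤ ((A \ Del).card : ℝ) := by linarith


/-- Concavity: for `0 < γ ≤ 1`, `0 ≤ y ≤ x`, `0 < x`:
`γ (x-y) x^(γ-1) ≤ x^γ - y^γ`. -/
lemma concave_rpow_diff {γ x y : ℝ} (hγ0 : 0 < γ) (hγ1 : γ ≤ 1)
    (hy0 : 0 ≤ y) (hyx : y ≤ x) (hx : 0 < x) :
    γ * (x - y) * x ^ (γ - 1) ≤ x ^ γ - y ^ γ := by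
  have hz0 : (0:ℝ) ≤ y / x := div_nonneg hy0 hx.le
  have hz1 : y / x ≤ 1 := (div_le_one hx).2 hyx
  have hbern : (y / x) ^ γ ≤ 1 + γ * (y / x - 1) := by
    have h := rpow_one_add_le_one_add_mul_self (s := y / x - 1) (by linarith) hγ0.le hγ1
    simpa using h
  have hyγ : y ^ γ = (y / x) ^ γ * x ^ γ := by
    rw [← Real.mul_rpow hz0 hx.le]
    field_simp
  have hxγpos : (0:ℝ) < x ^ γ := Real.rpow_pos_of_pos hx _
  have h2 : y ^ γ ≤ (1 + γ * (y / x - 1)) * x ^ γ :=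
    hyγ ▸ mul_le_mul_of_nonneg_right hbern hxγpos.le
  have hxg1 : x ^ (γ - 1) = x ^ γ / x := by
    rw [Real.rpow_sub hx, Real.rpow_one]
  rw [hxg1]
  have : (1 + γ * (y / x - 1)) * x ^ γ = x ^ γ - γ * (x - y) * (x ^ γ / x) := by
    field_simp
    ring
  rw [this] at h2
  linarith

lemma rpow_calc (d k : ℕ) (hd : 3 ≤ d) (hk : k = (d+1)/2) (s : ℕ) (hs : 1 ≤ s) :
    ((s:ℝ) ^ (-(((k:ℝ) - 1) / (d:ℝ))) * ((d:ℝ)+1) ^ (-(2/(d:ℝ)))) * (s:ℝ)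
      - ((d:ℝ)+1) * (s:ℝ) ^ (k:ℕ)
        * (((s:ℝ) ^ (-(((k:ℝ) - 1) / (d:ℝ))) * ((d:ℝ)+1) ^ (-(2/(d:ℝ))))) ^ (d+1 : ℕ)
      = (d:ℝ) * ((s:ℝ) ^ (1-(((k:ℝ) - 1) / (d:ℝ))) * ((d:ℝ)+1) ^ (-(((d:ℝ)+2)/(d:ℝ)))) := by
  have hδ : (0:ℝ) < (d:ℝ) := by
    have : (3:ℝ) ≤ (d:ℝ) := by exact_mod_cast hd
    linarith
  have hD : (0:ℝ) < (d:ℝ)+1 := by linarith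
  have hs0 : (0:ℝ) < (s:ℝ) := by exact_mod_cast hs
  set δ : ℝ := (d:ℝ)
  set K : ℝ := (k:ℝ)
  set γ : ℝ := (K - 1) / δ with hγ
  set D : ℝ := δ + 1 with hDdef
  -- convert nat pows to rpow
  have e1 : (s:ℝ) ^ (k:ℕ) = (s:ℝ) ^ (K : ℝ) := by
    rw [Real.rpow_natCast]
  have e2 : ((s:ℝ) ^ (-γ) * D ^ (-(2/δ))) ^ (d+1 : ℕ)
      = (s:ℝ) ^ (-γ * (δ+1)) * D ^ (-(2/δ) * (δ+1)) := by
    rw [mul_pow, ← Real.rpow_natCast ((s:ℝ) ^ (-γ)) (d+1), ← Real.rpow_natCast (D ^ (-(2/δ))) (d+1),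
      ← Real.rpow_mul hs0.le, ← Real.rpow_mul hD.le]
    push_cast
    ring_nf
    rfl
  rw [e1, e2]
  -- now pure rpow algebra
  have hmul : D * (s:ℝ) ^ (K:ℝ) * ((s:ℝ) ^ (-γ * (δ+1)) * D ^ (-(2/δ) * (δ+1)))
      = (s:ℝ) ^ (K + -γ * (δ+1)) * (D ^ (1 + -(2/δ) * (δ+1))) := by
    rw [Real.rpow_add hs0, Real.rpow_add hD, Real.rpow_one]
    ring
  rw [show ((s:ℝ) ^ (-γ) * D ^ (-(2/δ))) * (s:ℝ)
      = (s:ℝ) ^ (1-γ) * D ^ (-(2/δ)) from by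
    rw [show (1:ℝ) - γ = -γ + 1 from by ring, Real.rpow_add hs0, Real.rpow_one]; ring]
  rw [hmul]
  have hKγ : K + -γ * (δ+1) = 1 - γ := by
    rw [hγ]
    field_simp
    ring
  have hDexp : 1 + -(2/δ) * (δ+1) = -((δ+2)/δ) := by
    field_simp
    ring
  rw [hKγ, hDexp]
  have hsplit : D ^ (-(2/δ)) = D * D ^ (-((δ+2)/δ)) := by
    rw [show -(2/δ) = 1 + -((δ+2)/δ) from by field_simp; ring, Real.rpow_add hD, Real.rpow_one]
  rw [hsplit]
  ring

lemma final_id (d k : ℕ) (hd : 3 ≤ d) (hk : k = (d+1)/2) (s : ℕ) (hs : 1 ≤ s) :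
    (((d:ℝ)+1) ^ (((d:ℝ)+2)/(d:ℝ)) / ((k:ℝ) - 1)) * ((((k:ℝ)-1)/(d:ℝ))
      * ((d:ℝ) * ((s:ℝ) ^ (1-(((k:ℝ) - 1) / (d:ℝ))) * ((d:ℝ)+1) ^ (-(((d:ℝ)+2)/(d:ℝ)))))
      * ((s:ℝ) ^ ((((k:ℝ) - 1) / (d:ℝ)) - 1))) = 1 := by
  have hd3 : (3:ℝ) ≤ (d:ℝ) := by exact_mod_cast hd
  have hδ : (0:ℝ) < (d:ℝ) := by linarith
  have hD : (0:ℝ) < (d:ℝ)+1 := by linarith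
  have hs0 : (0:ℝ) < (s:ℝ) := by exact_mod_cast hs
  have hk2 : 2 ≤ k := by omega
  have hK2 : (2:ℝ) ≤ (k:ℝ) := by exact_mod_cast hk2
  have hK1 : (k:ℝ) - 1 ≠ 0 := by linarith
  have h1 : (s:ℝ) ^ (1-(((k:ℝ) - 1) / (d:ℝ))) * (s:ℝ) ^ ((((k:ℝ) - 1) / (d:ℝ)) - 1) = 1 := by
    rw [← Real.rpow_add hs0]
    norm_num
  have h2 : ((d:ℝ)+1) ^ (((d:ℝ)+2)/(d:ℝ)) * ((d:ℝ)+1) ^ (-(((d:ℝ)+2)/(d:ℝ))) = 1 := by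
    rw [← Real.rpow_add hD]
    norm_num
  have key : (((d:ℝ)+1) ^ (((d:ℝ)+2)/(d:ℝ)) / ((k:ℝ) - 1)) * ((((k:ℝ)-1)/(d:ℝ))
      * ((d:ℝ) * ((s:ℝ) ^ (1-(((k:ℝ) - 1) / (d:ℝ))) * ((d:ℝ)+1) ^ (-(((d:ℝ)+2)/(d:ℝ)))))
      * ((s:ℝ) ^ ((((k:ℝ) - 1) / (d:ℝ)) - 1)))
    = (((d:ℝ)+1) ^ (((d:ℝ)+2)/(d:ℝ)) * ((d:ℝ)+1) ^ (-(((d:ℝ)+2)/(d:ℝ))))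
      * ((s:ℝ) ^ (1-(((k:ℝ) - 1) / (d:ℝ))) * (s:ℝ) ^ ((((k:ℝ) - 1) / (d:ℝ)) - 1))
      * (((k:ℝ)-1) / ((k:ℝ)-1)) * ((d:ℝ)/(d:ℝ)) := by ring
  rw [key, h1, h2, div_self hK1, div_self hδ.ne']
  norm_num

lemma color_rec (d : ℕ) (hd : 3 ≤ d)
    (V : Finset α) (H : Finset (Finset α)) (hHV : ∀ e ∈ H, e ⊆ V)
    (hunif : ∀ e ∈ H, e.card = d + 1)
    (hcount : ∀ S ⊆ V,
      ((H.filter fun e => e ⊆ S).card : ℝ) ≤ ((d : ℝ) + 1) * (S.card : ℝ) ^ ((d + 1) / 2 : ℕ)) :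
    ∀ N : ℕ, ∀ S ⊆ V, S.card ≤ N →
    ∃ (m : ℕ) (c : α → Fin m),
      (∀ e ∈ H, e ⊆ S → ¬ ∃ j, ∀ v ∈ e, c v = j) ∧
      (m : ℝ) ≤ ((d : ℝ) + 1) ^ (((d : ℝ) + 2) / (d : ℝ)) / ((((d + 1) / 2 : ℕ) : ℝ) - 1)
          * (S.card : ℝ) ^ (((((d + 1) / 2 : ℕ) : ℝ) - 1) / (d : ℝ)) + 1 := by
  set k : ℕ := (d + 1) / 2 with hk
  have hd3 : (3:ℝ) ≤ (d:ℝ) := by exact_mod_cast hd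
  have hδ : (0:ℝ) < (d:ℝ) := by linarith
  have hD : (1:ℝ) < (d:ℝ)+1 := by linarith
  have hk2 : 2 ≤ k := by omega
  have hkd : k ≤ d := by omega
  have hK2 : (2:ℝ) ≤ (k:ℝ) := by exact_mod_cast hk2
  have hKd : (k:ℝ) ≤ (d:ℝ) := by exact_mod_cast hkd
  set γ : ℝ := ((k:ℝ) - 1) / (d:ℝ) with hγ
  set C : ℝ := ((d : ℝ) + 1) ^ (((d : ℝ) + 2) / (d : ℝ)) / ((k : ℝ) - 1) with hC
  have hγ0 : 0 < γ := by
    apply div_pos (by linarith) hδ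
  have hγ1 : γ ≤ 1 := by
    rw [hγ, div_le_one hδ]; linarith
  have hC0 : 0 < C := by
    apply div_pos (Real.rpow_pos_of_pos (by linarith) _) (by linarith)
  -- base case helper
  have base : ∀ S : Finset α, S.card = 0 →
      ∃ (m : ℕ) (c : α → Fin m),
      (∀ e ∈ H, e ⊆ S → ¬ ∃ j, ∀ v ∈ e, c v = j) ∧
      (m : ℝ) ≤ C * (S.card : ℝ) ^ γ + 1 := by
    intro S hS0
    refine ⟨1, fun _ => 0, ?_, ?_⟩
    · intro e he hsub
      rw [Finset.card_eq_zero] at hS0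
      subst hS0
      have := hunif e he
      rw [Finset.subset_empty] at hsub
      subst hsub
      rw [Finset.card_empty] at this
      omega
    · rw [hS0]
      push_cast
      rw [Real.zero_rpow (ne_of_gt hγ0)]
      norm_num
  intro N
  induction N with
  | zero =>
    intro S hSV hcard
    exact base S (Nat.le_zero.1 hcard)
  | succ N ih =>
    intro S hSV hcard
    rcases Nat.eq_zero_or_pos S.card with hS0 | hSpos
    · exact base S hS0
    have hSne : S.Nonempty := Finset.card_pos.1 hSpos
    set s : ℕ := S.card with hs
    have hs1 : 1 ≤ s := hSpos
    have hs0 : (0:ℝ) < (s:ℝ) := by exact_mod_cast hs1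
    set p : ℝ := (s:ℝ) ^ (-γ) * ((d:ℝ)+1) ^ (-(2/(d:ℝ))) with hp
    have hp0 : 0 < p := by
      apply mul_pos (Real.rpow_pos_of_pos hs0 _) (Real.rpow_pos_of_pos (by linarith) _)
    have hp1 : p < 1 := by
      have h1 : (s:ℝ) ^ (-γ) ≤ 1 :=
        Real.rpow_le_one_of_one_le_of_nonpos (by exact_mod_cast hs1) (by linarith)
      have h2 : ((d:ℝ)+1) ^ (-(2/(d:ℝ))) < 1 :=
        Real.rpow_lt_one_of_one_lt_of_neg hD (neg_lt_zero.2 (by positivity))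
      have h3 : (0:ℝ) < ((d:ℝ)+1) ^ (-(2/(d:ℝ))) := Real.rpow_pos_of_pos (by linarith) _
      calc p ≤ 1 * ((d:ℝ)+1) ^ (-(2/(d:ℝ))) := by
              rw [hp]; exact mul_le_mul_of_nonneg_right h1 h3.le
        _ = ((d:ℝ)+1) ^ (-(2/(d:ℝ))) := one_mul _
        _ < 1 := h2
    set F : Finset (Finset α) := H.filter (fun e => e ⊆ S) with hF
    have hFS : ∀ e ∈ F, e ⊆ S := fun e he => (Finset.mem_filter.1 he).2
    have hne : ∀ e ∈ F, e.Nonempty := by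
      intro e he
      have := hunif e (Finset.mem_filter.1 he).1
      rw [← Finset.card_pos, this]; omega
    obtain ⟨B, hBS, hBind, hBcard⟩ := exists_indep S hSne F hFS hne p hp0 hp1
    -- lower bound on |B|
    have hsum : ∑ e ∈ F, p ^ e.card = (F.card : ℝ) * p ^ (d+1) := by
      rw [Finset.sum_congr rfl (fun e he => by
        rw [hunif e (Finset.mem_filter.1 he).1]), Finset.sum_const, nsmul_eq_mul]
    have hFcount : (F.card : ℝ) ≤ ((d:ℝ)+1) * (s:ℝ) ^ (k:ℕ) := hcount S hSV
    have hθlb : (d:ℝ) * ((s:ℝ) ^ (1-γ) * ((d:ℝ)+1) ^ (-(((d:ℝ)+2)/(d:ℝ)))) ≤ (B.card : ℝ) := by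
      have hcalc := rpow_calc d k hd hk s hs1
      have hmono : ((d:ℝ)+1) * (s:ℝ) ^ (k:ℕ) * p ^ (d+1) ≥ (F.card : ℝ) * p ^ (d+1) :=
        mul_le_mul_of_nonneg_right hFcount (by positivity)
      have := hBcard
      rw [hsum] at this
      calc (d:ℝ) * ((s:ℝ) ^ (1-γ) * ((d:ℝ)+1) ^ (-(((d:ℝ)+2)/(d:ℝ))))
          = p * (s:ℝ) - ((d:ℝ)+1) * (s:ℝ) ^ (k:ℕ) * p ^ (d+1) := by rw [← hcalc]
        _ ≤ p * (s:ℝ) - (F.card : ℝ) * p ^ (d+1) := by linarith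
        _ ≤ (B.card : ℝ) := this
    have hθpos : (0:ℝ) < (d:ℝ) * ((s:ℝ) ^ (1-γ) * ((d:ℝ)+1) ^ (-(((d:ℝ)+2)/(d:ℝ)))) := by
      positivity
    have hB1 : 1 ≤ B.card := by
      rcases Nat.eq_zero_or_pos B.card with h0 | h
      · exfalso
        rw [h0] at hθlb
        norm_num at hθlb
        linarith
      · exact h
    -- recurse on S \ B
    have hS'V : S \ B ⊆ V := (Finset.sdiff_subset).trans hSV
    have hBS' : B.card ≤ S.card := Finset.card_le_card hBS
    have hS'card : (S \ B).card = s - B.card := by rw [Finset.card_sdiff_of_subset hBS]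
    have hS'le : (S \ B).card ≤ N := by
      rw [hS'card]; omega
    obtain ⟨m', c', hproper', hbound'⟩ := ih (S \ B) hS'V hS'le
    refine ⟨m' + 1, fun v => if v ∈ B then Fin.last m' else Fin.castSucc (c' v), ?_, ?_⟩
    · -- properness
      intro e he hsub ⟨j, hj⟩
      by_cases hint : ∃ v0 ∈ e, v0 ∈ B
      · obtain ⟨v0, hv0e, hv0B⟩ := hint
        have hj0 : j = Fin.last m' := by
          have := hj v0 hv0e
          simp only [if_pos hv0B] at this
          exact this.symm
        have heB : e ⊆ B := by
          intro v hv
          by_contra hvB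
          have := hj v hv
          simp only [if_neg hvB, hj0] at this
          exact absurd this (Fin.castSucc_lt_last (c' v)).ne
        exact hBind e (Finset.mem_filter.2 ⟨he, hsub⟩) heB
      · push_neg at hint
        have heS' : e ⊆ S \ B := fun v hv => Finset.mem_sdiff.2 ⟨hsub hv, hint v hv⟩
        have hene : e.Nonempty := by
          have := hunif e he
          rw [← Finset.card_pos, this]; omega
        obtain ⟨v0, hv0⟩ := hene
        apply hproper' e he heS'
        refine ⟨c' v0, fun v hv => ?_⟩
        have h1 := hj v hv
        have h2 := hj v0 hv0
        simp only [if_neg (hint v hv)] at h1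
        simp only [if_neg (hint v0 hv0)] at h2
        exact Fin.castSucc_injective m' (h1.trans h2.symm)
    · -- the bound
      have hcast : ((S \ B).card : ℝ) = (s:ℝ) - (B.card : ℝ) := by
        rw [hS'card]
        push_cast [Nat.cast_sub (show B.card ≤ s from hBS')]
        ring
      set a : ℝ := (B.card : ℝ) with ha
      have ha0 : 0 ≤ a := by positivity
      have haS : a ≤ (s:ℝ) := by rw [ha]; exact_mod_cast hBS'
      have hconc := concave_rpow_diff hγ0 hγ1 (by linarith : (0:ℝ) ≤ (s:ℝ) - a)
        (by linarith) hs0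
      have hfin := final_id d k hd hk s hs1
      have hge1 : (1:ℝ) ≤ C * (s:ℝ)^γ - C * ((s:ℝ) - a)^γ := by
        have hstep : γ * ((d:ℝ) * ((s:ℝ) ^ (1-γ) * ((d:ℝ)+1) ^ (-(((d:ℝ)+2)/(d:ℝ)))))
            * (s:ℝ) ^ (γ - 1) ≤ γ * ((s:ℝ) - ((s:ℝ) - a)) * (s:ℝ) ^ (γ - 1) := by
          apply mul_le_mul_of_nonneg_right _ (Real.rpow_nonneg hs0.le _)
          apply mul_le_mul_of_nonneg_left _ hγ0.le
          linarith
        have h2 : γ * ((d:ℝ) * ((s:ℝ) ^ (1-γ) * ((d:ℝ)+1) ^ (-(((d:ℝ)+2)/(d:ℝ)))))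
            * (s:ℝ) ^ (γ - 1) ≤ (s:ℝ)^γ - ((s:ℝ) - a)^γ := le_trans hstep hconc
        have h3 := mul_le_mul_of_nonneg_left h2 hC0.le
        rw [hfin, mul_sub] at h3
        exact h3
      rw [hcast] at hbound' 
      have hm : ((m' + 1 : ℕ) : ℝ) = (m' : ℝ) + 1 := by push_cast; ring
      rw [hm]
      linarith

end DeyPachHelpers


/-- Chromatic number bound for `(d+1)`-uniform hypergraphs whose induced
subhypergraphs satisfy the Dey–Pach-type edge count `(d+1) * |S| ^ ⌈d/2⌉`. -/
theorem chromatic_bound_dey_pach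
    {α : Type*} [DecidableEq α] (d : ℕ) (hd : 3 ≤ d)
    (V : Finset α) (H : Finset (Finset α)) (hHV : ∀ e ∈ H, e ⊆ V)
    (hunif : ∀ e ∈ H, e.card = d + 1)
    (n : ℕ) (hn : V.card = n) (hn1 : 1 ≤ n)
    (hcount : ∀ S ⊆ V,
      ((H.filter fun e => e ⊆ S).card : ℝ) ≤ ((d : ℝ) + 1) * (S.card : ℝ) ^ ((d + 1) / 2 : ℕ)) :
    ∃ (m : ℕ) (c : α → Fin m),
      (∀ e ∈ H, ¬ ∃ j, ∀ v ∈ e, c v = j) ∧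
      (m : ℝ) ≤ ((d : ℝ) + 1) ^ (((d : ℝ) + 2) / (d : ℝ)) / ((((d + 1) / 2 : ℕ) : ℝ) - 1)
          * (n : ℝ) ^ (((((d + 1) / 2 : ℕ) : ℝ) - 1) / (d : ℝ)) + 1 := by
  obtain ⟨m, c, hprop, hbound⟩ :=
    color_rec d hd V H hHV hunif hcount V.card V (Finset.Subset.refl V) le_rfl
  refine ⟨m, c, fun e he => hprop e he (hHV e he), ?_⟩
  rw [hn] at hbound
  exact hbound
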